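/- arXiv:1106.2586 — 2 statements merged into one kernel-verified Lean document; each statement's English description precedes it below -/
import Mathlib

section
/- For elements x, y in a Coxeter group W, the set {uv : u ≤ x, v ≤ y} (products of elements below x and y in Bruhat order) contains a unique maximal element in Bruhat order, called the Demazure product x * y. -/
/-- The Bruhat order on a Coxeter group, defined via the subword property:
`u ≤ v` iff some reduced word for `v` contains a subword whose product is `u`. -/
def bruhatLE {B W : Type*} [Group W] {M : CoxeterMatrix B} (cs : CoxeterSystem M W)
    (u v : W) : Prop :=
  ∃ l : List B, cs.IsReduced l ∧ cs.wordProd l = v ∧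
    ∃ l' : List B, l'.Sublist l ∧ cs.wordProd l' = u

open CoxeterSystem List

attribute [local instance] Classical.propDecidable

namespace DemazureAux

variable {B W : Type*} [Group W] {M : CoxeterMatrix B} (cs : CoxeterSystem M W)

local prefix:100 "s" => cs.simple
local prefix:100 "π" => cs.wordProd
local prefix:100 "ℓ" => cs.length
local prefix:100 "ris" => cs.rightInvSeq

/-! ### The sign permutation representation -/

noncomputable def muFun (i : B) : W × ℤˣ → W × ℤˣ :=
  fun p => (s i * p.1 * s i, if p.1 = s i then -p.2 else p.2)

lemma muFun_involutive (i : B) : Function.Involutive (muFun cs i) := by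
  rintro ⟨t, ε⟩
  have hfix : s i * (s i * t * s i) * s i = t := by
    simp [mul_assoc, cs.simple_mul_simple_cancel_left, cs.simple_mul_simple_self]
  have hcond : (s i * t * s i = s i) ↔ t = s i := by
    constructor
    · intro h
      have := congrArg (fun z => s i * z * s i) h
      simpa [mul_assoc, cs.simple_mul_simple_cancel_left, cs.simple_mul_simple_self] using this
    · intro h; rw [h, cs.simple_mul_simple_self, one_mul]
  simp only [muFun]
  simp only [hcond, hfix]
  by_cases h : t = s i
  · simp [h]
  · simp [h]

noncomputable def mu (i : B) : Equiv.Perm (W × ℤˣ) :=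
  Function.Involutive.toPerm _ (muFun_involutive cs i)

lemma mu_apply (i : B) (p : W × ℤˣ) :
    mu cs i p = (s i * p.1 * s i, if p.1 = s i then -p.2 else p.2) := rfl

lemma ris_cons (i : B) (ω : List B) :
    ris (i :: ω) = ((π ω)⁻¹ * s i * π ω) :: ris ω := rfl

lemma prod_map_mu (ω : List B) (t : W) (ε : ℤˣ) :
    ((ω.map (mu cs)).prod) (t, ε)
      = (π ω * t * (π ω)⁻¹, (-1 : ℤˣ) ^ (count t (ris ω)) * ε) := by
  induction ω with
  | nil => simp
  | cons a ω ih =>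
    rw [map_cons, prod_cons, Equiv.Perm.mul_apply, ih, mu_apply]
    have hcond : π ω * t * (π ω)⁻¹ = s a ↔ t = (π ω)⁻¹ * s a * π ω := by
      constructor
      · intro h
        have := congrArg (fun z => (π ω)⁻¹ * z * π ω) h
        simpa [mul_assoc] using this
      · intro h; rw [h]; group
    rw [ris_cons, count_cons]
    simp only [beq_iff_eq]
    by_cases h : t = (π ω)⁻¹ * s a * π ω
    · rw [if_pos (hcond.mpr h), if_pos h.symm, Prod.mk.injEq]
      constructor
      · simp [wordProd_cons, mul_assoc, mul_inv_rev, cs.inv_simple]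
      · simp [pow_succ, mul_neg, neg_mul]
    · rw [if_neg (fun hc => h (hcond.mp hc)), if_neg (fun hc => h hc.symm), Prod.mk.injEq]
      constructor
      · simp [wordProd_cons, mul_assoc, mul_inv_rev, cs.inv_simple]
      · simp

lemma prod_map_alt {G : Type*} [Monoid G] (f : B → G) (i i' : B) (m : ℕ) :
    ((alternatingWord i i' (2 * m)).map f).prod = (f i * f i') ^ m := by
  induction m with
  | zero => simp [alternatingWord]
  | succ m ih =>
    have h2 : 2 * (m + 1) = (2 * m + 1) + 1 := by ring
    rw [h2, alternatingWord_succ', alternatingWord_succ']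
    have hne : ¬ Even (2 * m + 1) := by simp [parity_simps]
    rw [if_neg hne, if_pos (by simp)]
    rw [map_cons, map_cons, prod_cons, prod_cons, ih, pow_succ']
    rw [← mul_assoc]

/-- `π (alternatingWord i i' n)⁻¹ * π (alternatingWord i i' (n+1)) = s i' * (s i * s i')^n`. -/
lemma alt_quot (i i' : B) (n : ℕ) :
    (π (alternatingWord i i' n))⁻¹ * π (alternatingWord i i' (n + 1))
      = s i' * (s i * s i') ^ n := by
  have h1 : s i' * (s i * s i') = (s i * s i')⁻¹ * s i' := by
    rw [mul_inv_rev, cs.inv_simple, cs.inv_simple, mul_assoc]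
  have hy : ∀ k : ℕ, s i' * (s i * s i') ^ k = ((s i * s i')⁻¹) ^ k * s i' := by
    intro k
    induction k with
    | zero => simp
    | succ k ih =>
      rw [pow_succ', ← mul_assoc, h1, mul_assoc, ih, ← mul_assoc, ← pow_succ']
  rcases Nat.even_or_odd n with he | ho
  · obtain ⟨k, hk⟩ := he
    have hn : n = 2 * k := by omega
    have h1' : π (alternatingWord i i' n) = (s i * s i') ^ k := by
      rw [cs.prod_alternatingWord_eq_mul_pow, if_pos (by rw [hn]; exact ⟨k, by ring⟩)]
      rw [one_mul]
      congr 1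
      omega
    have h2' : π (alternatingWord i i' (n + 1)) = s i' * (s i * s i') ^ k := by
      rw [cs.prod_alternatingWord_eq_mul_pow, if_neg (by rw [hn]; simp [parity_simps])]
      congr 2
      omega
    rw [h1', h2', hy k, hy n, ← mul_assoc, ← inv_pow, ← pow_add,
      show k + k = n by omega]
  · obtain ⟨k, hk⟩ := ho
    have h1' : π (alternatingWord i i' n) = s i' * (s i * s i') ^ k := by
      rw [cs.prod_alternatingWord_eq_mul_pow, if_neg (by rw [hk]; simp [parity_simps])]
      congr 2
      omega
    have h2' : π (alternatingWord i i' (n + 1)) = (s i * s i') ^ (k + 1) := by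
      rw [cs.prod_alternatingWord_eq_mul_pow, if_pos (by rw [hk]; exact ⟨k + 1, by ring⟩)]
      rw [one_mul]
      congr 1
      omega
    rw [h1', h2', mul_inv_rev, cs.inv_simple, ← inv_pow, mul_assoc, hy (k + 1),
      ← mul_assoc, ← pow_add, hy n, show k + (k + 1) = n by omega]

lemma ris_alt_getD (i i' : B) : ∀ (n : ℕ) (j : ℕ), j < n →
    (ris (alternatingWord i i' n)).getD j 1 = s i' * (s i * s i') ^ (n - 1 - j) := by
  intro n
  induction n with
  | zero => omega
  | succ n ih =>
    intro j hj
    rw [alternatingWord_succ', ris_cons]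
    match j with
    | 0 =>
      have hlet : cs.simple (if Even n then i' else i) * π (alternatingWord i i' n)
          = π (alternatingWord i i' (n + 1)) := by
        rw [alternatingWord_succ', wordProd_cons]
      rw [getD_cons_zero, mul_assoc, hlet, alt_quot, show n + 1 - 1 - 0 = n by omega]
    | j + 1 =>
      rw [getD_cons_succ, ih j (by omega), show n - 1 - j = n + 1 - 1 - (j + 1) by omega]

lemma ris_alt_double (i i' : B) :
    ris (alternatingWord i i' (2 * M i i'))
      = ris (alternatingWord i i' (M i i')) ++ ris (alternatingWord i i' (M i i')) := by
  set m := M i i' with hm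
  apply List.ext_getElem
  · simp [two_mul]
  · intro j h1 h2
    have hj : j < 2 * m := by simpa using h1
    have hlen : (ris (alternatingWord i i' m)).length = m := by simp
    rw [← List.getD_eq_getElem _ 1 h1, ris_alt_getD cs i i' _ j hj]
    rcases lt_or_ge j m with hjm | hjm
    · rw [List.getElem_append_left (by omega)]
      rw [← List.getD_eq_getElem _ 1 (by omega), ris_alt_getD cs i i' _ j (by omega)]
      rw [show 2 * m - 1 - j = (m - 1 - j) + m by omega, pow_add, hm,
        cs.simple_mul_simple_pow, mul_one]
    · rw [List.getElem_append_right (by omega)]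
      rw [← List.getD_eq_getElem _ 1 (by simp; omega), ris_alt_getD cs i i' _ _ (by simp at h2 ⊢; omega)]
      congr 2
      simp at h2
      omega

lemma mu_liftable : M.IsLiftable (mu cs) := by
  intro i i'
  rw [← prod_map_alt (mu cs) i i' (M i i')]
  apply Equiv.ext
  rintro ⟨t, ε⟩
  rw [prod_map_mu]
  have hπ : π (alternatingWord i i' (2 * M i i')) = 1 := by
    rw [cs.prod_alternatingWord_eq_mul_pow, if_pos ⟨M i i', by ring⟩, one_mul,
      show 2 * M i i' / 2 = M i i' by omega, cs.simple_mul_simple_pow]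
  have hcount : count t (ris (alternatingWord i i' (2 * M i i')))
      = 2 * count t (ris (alternatingWord i i' (M i i'))) := by
    rw [ris_alt_double, count_append]
    ring
  rw [hπ, hcount, pow_mul]
  simp

noncomputable def phi : W →* Equiv.Perm (W × ℤˣ) := cs.lift ⟨mu cs, mu_liftable cs⟩

lemma phi_wordProd (ω : List B) : phi cs (π ω) = (ω.map (mu cs)).prod := by
  induction ω with
  | nil => simp [phi]
  | cons a ω ih =>
    rw [wordProd_cons, map_mul, ih, map_cons, prod_cons]
    congr 1
    exact cs.lift_apply_simple (mu_liftable cs) a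

lemma count_parity {ω ω' : List B} (h : π ω = π ω') (t : W) :
    (-1 : ℤˣ) ^ (count t (ris ω)) = (-1) ^ (count t (ris ω')) := by
  have h2 := congrArg (phi cs) h
  rw [phi_wordProd, phi_wordProd] at h2
  have h3 := congrArg (fun f : Equiv.Perm (W × ℤˣ) => (f (t, 1)).2) h2
  simpa [prod_map_mu] using h3

lemma ris_append (σ τ : List B) :
    ris (σ ++ τ) = (ris σ).map (fun u => (π τ)⁻¹ * u * π τ) ++ ris τ := by
  induction σ with
  | nil => simp
  | cons a σ ih =>
    rw [cons_append, ris_cons, ris_cons, ih, map_cons, cons_append]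
    congr 1
    rw [wordProd_append, mul_inv_rev]
    group

lemma lis_eq_map (ρ : List B) :
    cs.leftInvSeq ρ = (ris ρ).map (fun u => π ρ * u * (π ρ)⁻¹) := by
  induction ρ with
  | nil => simp
  | cons a ρ ih =>
    rw [show cs.leftInvSeq (a :: ρ)
        = s a :: List.map (⇑(MulAut.conj (s a))) (cs.leftInvSeq ρ) from rfl,
      ris_cons, map_cons]
    congr 1
    · simp [wordProd_cons, mul_assoc, mul_inv_rev, cs.inv_simple, mul_inv_cancel_left,
        inv_mul_cancel_left, cs.simple_mul_simple_cancel_left]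
    · rw [ih, map_map]
      apply List.map_congr_left
      intro u _
      simp only [Function.comp_apply, MulAut.conj_apply, wordProd_cons, mul_inv_rev,
        cs.inv_simple]
      group

lemma count_map_conj (g : W) (l : List W) (t : W) :
    count t (l.map (fun u => g⁻¹ * u * g)) = count (g * t * g⁻¹) l := by
  induction l with
  | nil => simp
  | cons a l ih =>
    rw [map_cons, count_cons, count_cons, ih]
    congr 1
    have hiff : (g⁻¹ * a * g = t) ↔ (a = g * t * g⁻¹) := by
      constructor
      · intro h; rw [← h]; group
      · intro h; rw [h]; group
    simp only [beq_iff_eq, hiff]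

lemma count_map_conj' (g : W) (l : List W) (t : W) :
    count t (l.map (fun u => g * u * g⁻¹)) = count (g⁻¹ * t * g) l := by
  induction l with
  | nil => simp
  | cons a l ih =>
    rw [map_cons, count_cons, count_cons, ih]
    congr 1
    have hiff : (g * a * g⁻¹ = t) ↔ (a = g⁻¹ * t * g) := by
      constructor
      · intro h; rw [← h]; group
      · intro h; rw [h]; group
    simp only [beq_iff_eq, hiff]

theorem strong_exchange {ω : List B} {t : W} (ht : cs.IsRightInversion (π ω) t) :
    t ∈ ris ω := by
  obtain ⟨hrefl, hlen⟩ := ht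
  obtain ⟨v, i, htv⟩ := hrefl
  have hrefl : cs.IsReflection t := ⟨v, i, htv⟩
  obtain ⟨ρ, hρ⟩ := cs.wordProd_surjective v
  obtain ⟨ω', red', hω'⟩ := cs.exists_reduced_word' (π ω * t)
  set τ : List B := ρ ++ i :: ρ.reverse with hτdef
  have hτ : π τ = t := by
    rw [hτdef, wordProd_append, wordProd_cons, wordProd_reverse, hρ, htv, ← mul_assoc]
  have hππ : π (ω' ++ τ) = π ω := by
    rw [wordProd_append, hτ, ← hω', mul_assoc, hrefl.mul_self, mul_one]
  have hc1 : count t (ris (ω' ++ τ)) = count t (ris ω') + count t (ris τ) := by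
    rw [ris_append, count_append]
    congr 1
    rw [count_map_conj (π τ)]
    congr 1
    rw [hτ]
    group
  have hc2 : count t (ris ω') = 0 := by
    rw [count_eq_zero]
    intro hmem
    have h2 := (cs.isRightInversion_of_mem_rightInvSeq red' hmem).2
    rw [← hω', mul_assoc, hrefl.mul_self, mul_one] at h2
    omega
  have hc3 : count t (ris τ) = 2 * count (s i) (ris ρ) + 1 := by
    rw [hτdef, ris_append, count_append, ris_cons, count_cons]
    have hrev : π (ρ.reverse) = v⁻¹ := by rw [wordProd_reverse, hρ]
    have hhead : ((π (ρ.reverse))⁻¹ * s i * π (ρ.reverse) == t) = true := by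
      simp only [beq_iff_eq, hrev, inv_inv, ← htv]
    rw [if_pos hhead]
    have hpart1 : count t ((ris ρ).map
        (fun u => (π (i :: ρ.reverse))⁻¹ * u * π (i :: ρ.reverse))) = count (s i) (ris ρ) := by
      rw [count_map_conj (π (i :: ρ.reverse))]
      congr 1
      rw [wordProd_cons, hrev, mul_inv_rev, cs.inv_simple, inv_inv, htv]
      simp [mul_assoc, inv_mul_cancel_left, mul_inv_cancel_left,
        cs.simple_mul_simple_cancel_left]
    have hpart2 : count t (ris (ρ.reverse)) = count (s i) (ris ρ) := by
      rw [cs.rightInvSeq_reverse, count_reverse, lis_eq_map, count_map_conj' (π ρ)]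
      congr 1
      rw [hρ, htv]
      simp [mul_assoc, inv_mul_cancel_left, mul_inv_cancel_left]
    rw [hpart1, hpart2]
    ring
  have hpar := count_parity cs hππ t
  rw [hc1, hc2, hc3, zero_add] at hpar
  rw [Odd.neg_one_pow ⟨count (s i) (ris ρ), by ring⟩] at hpar
  by_contra hmem
  rw [count_eq_zero.mpr hmem, pow_zero] at hpar
  exact absurd hpar (by decide)

lemma mem_ris_index {ω : List B} {t : W} (h : t ∈ ris ω) :
    ∃ j, j < ω.length ∧ (ris ω).getD j 1 = t := by
  obtain ⟨j, hj, hget⟩ := List.mem_iff_getElem.mp h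
  exact ⟨j, by simpa using hj, by rw [List.getD_eq_getElem _ 1 hj]; exact hget⟩
/-! ### Bruhat order basics -/

lemma bruhat_refl (w : W) : bruhatLE cs w w := by
  obtain ⟨ω, red, hw⟩ := cs.exists_reduced_word' w
  exact ⟨ω, red, hw.symm, ω, List.Sublist.refl ω, hw.symm⟩

lemma bruhat_length_le {u w : W} (h : bruhatLE cs u w) : ℓ u ≤ ℓ w := by
  obtain ⟨l, red, hl, l', sub, hu⟩ := h
  have h1 : ℓ (π l') ≤ l'.length := cs.length_wordProd_le l'
  have h2 : l'.length ≤ l.length := sub.length_le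
  have h3 : ℓ (π l) = l.length := red
  rw [← hu, ← hl]
  omega

lemma bruhat_antisymm {u w : W} (h1 : bruhatLE cs u w) (h2 : bruhatLE cs w u) : u = w := by
  have hle := bruhat_length_le cs h1
  have hge := bruhat_length_le cs h2
  obtain ⟨l, red, hl, l', sub, hu⟩ := h1
  have e1 : ℓ (π l') ≤ l'.length := cs.length_wordProd_le l'
  have e2 : l'.length ≤ l.length := sub.length_le
  have e3 : ℓ (π l) = l.length := red
  have e4 : ℓ (π l') = ℓ (π l) := by rw [hu, hl]; omega
  have hlen : l'.length = l.length := by omega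
  rw [← hu, sub.eq_of_length hlen, hl]

lemma bruhat_le_one {u : W} (h : bruhatLE cs u 1) : u = 1 := by
  obtain ⟨l, red, hl, l', sub, hu⟩ := h
  have h3 : ℓ (π l) = l.length := red
  rw [hl, cs.length_one] at h3
  have hnil : l = [] := List.length_eq_zero_iff.mp h3.symm
  subst hnil
  rw [List.sublist_nil.mp sub] at hu
  rw [← hu, wordProd_nil]

/-! ### The chain ("reflection") order -/

def bstep (a b : W) : Prop := ∃ t, cs.IsReflection t ∧ a * t = b ∧ ℓ a < ℓ b

def ble (u w : W) : Prop := Relation.ReflTransGen (bstep cs) u w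

lemma ble_refl (w : W) : ble cs w w := Relation.ReflTransGen.refl

lemma ble_trans {a b c : W} (h1 : ble cs a b) (h2 : ble cs b c) : ble cs a c :=
  Relation.ReflTransGen.trans h1 h2

lemma ble_smul_of_lt {w : W} {i : B} (h : ℓ w < ℓ (s i * w)) : ble cs w (s i * w) := by
  apply Relation.ReflTransGen.single
  refine ⟨w⁻¹ * s i * w, ⟨w⁻¹, i, by rw [inv_inv]⟩, ?_, h⟩
  group

lemma ble_smul_of_gt {w : W} {i : B} (h : ℓ (s i * w) < ℓ w) : ble cs (s i * w) w := by
  apply Relation.ReflTransGen.single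
  refine ⟨w⁻¹ * s i * w, ⟨w⁻¹, i, by rw [inv_inv]⟩, ?_, h⟩
  simp [mul_assoc, mul_inv_cancel_left, inv_mul_cancel_left, cs.simple_mul_simple_cancel_left]

lemma key_step {a c : W} (i : B) (t : W) (ht : cs.IsReflection t) (hac : a * t = c)
    (hlt : ℓ a < ℓ c) (hc : ℓ (s i * c) < ℓ c) : ble cs (s i * a) c := by
  obtain ⟨ω₁, red₁, hω₁⟩ := cs.exists_reduced_word' (s i * c)
  have red₁' : ℓ (π ω₁) = ω₁.length := red₁
  have hc2 : ℓ (s i * c) + 1 = ℓ c := by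
    rcases cs.length_simple_mul c i with h | h <;> omega
  have hcw : π (i :: ω₁) = c := by
    rw [wordProd_cons, ← hω₁, cs.simple_mul_simple_cancel_left]
  have hca : c * t = a := by rw [← hac, mul_assoc, ht.mul_self, mul_one]
  have hti : cs.IsRightInversion (π (i :: ω₁)) t := by
    rw [hcw]
    exact ⟨ht, by rw [hca]; exact hlt⟩
  obtain ⟨j, hj, hget⟩ := mem_ris_index cs (strong_exchange cs hti)
  have herase : π ((i :: ω₁).eraseIdx j) = a := by
    rw [← cs.wordProd_mul_getD_rightInvSeq, hget, hcw, hca]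
  match j, hj, hget with
  | 0, _, hget =>
    have ha : a = s i * c := by
      rw [← herase]
      simp only [List.eraseIdx_cons_zero]
      rw [← hω₁]
    rw [ha, cs.simple_mul_simple_cancel_left]
    exact ble_refl cs c
  | j + 1, hj, hget =>
    have hjl : j < ω₁.length := by simpa using hj
    set t' := (cs.rightInvSeq ω₁).getD j 1 with ht'
    have ht'mem : t' ∈ cs.rightInvSeq ω₁ := by
      rw [ht', List.getD_eq_getElem _ 1 (by simpa using hjl)]
      exact List.getElem_mem _
    have ht'refl : cs.IsReflection t' := cs.isReflection_of_mem_rightInvSeq ω₁ ht'mem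
    have hsa : s i * a = π (ω₁.eraseIdx j) := by
      rw [← herase, List.eraseIdx_cons_succ, wordProd_cons, cs.simple_mul_simple_cancel_left]
    have hstep : (s i * a) * t' = s i * c := by
      rw [hsa, hω₁, ← cs.wordProd_mul_getD_rightInvSeq ω₁ j, ← ht', mul_assoc,
        cs.getD_rightInvSeq_mul_self, mul_one]
    have hlen2 : ℓ (s i * a) < ℓ (s i * c) := by
      have e1 : ℓ (π (ω₁.eraseIdx j)) ≤ (ω₁.eraseIdx j).length := cs.length_wordProd_le _
      have e2 : (ω₁.eraseIdx j).length + 1 = ω₁.length := List.length_eraseIdx_add_one hjl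
      have e3 : ℓ (s i * c) = ω₁.length := by rw [hω₁, red₁']
      rw [hsa]
      omega
    exact ble_trans cs (Relation.ReflTransGen.single ⟨t', ht'refl, hstep, hlen2⟩)
      (ble_smul_of_gt cs hc)

lemma ble_smul_of_le_of_descent {u w : W} (i : B) (hd : ℓ (s i * w) < ℓ w) (h : ble cs u w) :
    ble cs (s i * u) w := by
  induction h using Relation.ReflTransGen.head_induction_on with
  | refl => exact ble_smul_of_gt cs hd
  | @head a c h' hcw ih =>
    obtain ⟨t, ht, hat, hlt⟩ := h'
    rcases cs.length_simple_mul a i with hup | hdown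
    · rcases cs.length_simple_mul c i with hup2 | hdown2
      · have hstep : (s i * a) * t = s i * c := by rw [mul_assoc, hat]
        exact ble_trans cs (Relation.ReflTransGen.single ⟨t, ht, hstep, by omega⟩) ih
      · exact ble_trans cs (key_step cs i t ht hat hlt (by omega)) hcw
    · refine ble_trans cs (ble_smul_of_gt cs (by omega)) ?_
      exact ble_trans cs (Relation.ReflTransGen.single ⟨t, ht, hat, hlt⟩) hcw

lemma ble_smul_of_le_of_ascent {u w : W} (i : B) (hd : ℓ w < ℓ (s i * w)) (h : ble cs u w) :
    ble cs (s i * u) (s i * w) := by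
  have h1 : ble cs u (s i * w) := ble_trans cs h (ble_smul_of_lt cs hd)
  have h2 : ℓ (s i * (s i * w)) < ℓ (s i * w) := by
    rw [cs.simple_mul_simple_cancel_left]; exact hd
  exact ble_smul_of_le_of_descent cs i h2 h1

/-! ### Deletion lemma -/

lemma deletion (σ : List B) : ∃ σ', σ'.Sublist σ ∧ cs.IsReduced σ' ∧ π σ' = π σ := by
  induction σ using List.reverseRecOn with
  | nil =>
    refine ⟨[], List.Sublist.refl [], ?_, rfl⟩
    show ℓ (π []) = ([] : List B).length
    simp
  | append_singleton σ₀ a ih =>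
    obtain ⟨σ₀', hsub, hred, hπ⟩ := ih
    have hred' : ℓ (π σ₀') = σ₀'.length := hred
    by_cases hra : cs.IsReduced (σ₀' ++ [a])
    · exact ⟨σ₀' ++ [a], hsub.append (List.Sublist.refl [a]), hra,
        by rw [wordProd_append, wordProd_append, hπ]⟩
    · have hlen : ℓ (π σ₀' * s a) + 1 = ℓ (π σ₀') := by
        rcases cs.length_mul_simple (π σ₀') a with h | h
        · exfalso
          apply hra
          show ℓ (π (σ₀' ++ [a])) = (σ₀' ++ [a]).length
          rw [wordProd_append, wordProd_singleton, h, List.length_append]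
          simp [hred']
        · exact h
      have hti : cs.IsRightInversion (π σ₀') (s a) := ⟨cs.isReflection_simple a, by omega⟩
      obtain ⟨j, hj, hget⟩ := mem_ris_index cs (strong_exchange cs hti)
      refine ⟨σ₀'.eraseIdx j, ?_, ?_, ?_⟩
      · exact ((σ₀'.eraseIdx_sublist j).trans hsub).trans (List.sublist_append_left σ₀ [a])
      · show ℓ (π (σ₀'.eraseIdx j)) = (σ₀'.eraseIdx j).length
        rw [← cs.wordProd_mul_getD_rightInvSeq σ₀' j, hget]
        have e2 : (σ₀'.eraseIdx j).length + 1 = σ₀'.length := List.length_eraseIdx_add_one hj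
        omega
      · rw [← cs.wordProd_mul_getD_rightInvSeq σ₀' j, hget, wordProd_append,
          wordProd_singleton, hπ]

/-! ### Equivalence of the two orders -/

lemma subword_of_ble {u w : W} (h : ble cs u w) {ω : List B} (red : cs.IsReduced ω)
    (hw : π ω = w) : ∃ σ, σ.Sublist ω ∧ cs.IsReduced σ ∧ π σ = u := by
  induction h using Relation.ReflTransGen.head_induction_on with
  | refl => exact ⟨ω, List.Sublist.refl ω, red, hw⟩
  | @head a c h' hcw ih =>
    obtain ⟨σc, hsub, redc, hπc⟩ := ih
    obtain ⟨t, ht, hat, hlt⟩ := h'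
    have hca : c * t = a := by rw [← hat, mul_assoc, ht.mul_self, mul_one]
    have hti : cs.IsRightInversion (π σc) t := by
      rw [hπc]
      exact ⟨ht, by rw [hca]; exact hlt⟩
    obtain ⟨j, hj, hget⟩ := mem_ris_index cs (strong_exchange cs hti)
    obtain ⟨σ', hsub', red', hπ'⟩ := deletion cs (σc.eraseIdx j)
    refine ⟨σ', (hsub'.trans (σc.eraseIdx_sublist j)).trans hsub, red', ?_⟩
    rw [hπ', ← cs.wordProd_mul_getD_rightInvSeq σc j, hget, hπc, hca]

lemma ble_of_sublist_core {σ ω : List B} (h : σ.Sublist ω) :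
    cs.IsReduced σ → cs.IsReduced ω → ble cs (π σ) (π ω) := by
  induction h with
  | slnil => intro _ _; exact ble_refl cs _
  | @cons σ ω a h ih =>
    intro hredσ hredω
    have hredω' : cs.IsReduced ω := by simpa using hredω.drop 1
    refine ble_trans cs (ih hredσ hredω') ?_
    have h1 : ℓ (π (a :: ω)) = ω.length + 1 := by simpa [CoxeterSystem.IsReduced] using hredω
    have h2 : ℓ (π ω) = ω.length := hredω'
    have h3 : ℓ (π ω) < ℓ (s a * π ω) := by rw [← wordProd_cons]; omega
    rw [wordProd_cons]
    exact ble_smul_of_lt cs h3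
  | @cons_cons σ ω a h ih =>
    intro hredσ hredω
    have hredσ' : cs.IsReduced σ := by simpa using hredσ.drop 1
    have hredω' : cs.IsReduced ω := by simpa using hredω.drop 1
    have h1 : ℓ (π (a :: ω)) = ω.length + 1 := by simpa [CoxeterSystem.IsReduced] using hredω
    have h2 : ℓ (π ω) = ω.length := hredω'
    have h3 : ℓ (π ω) < ℓ (s a * π ω) := by rw [← wordProd_cons]; omega
    rw [wordProd_cons, wordProd_cons]
    exact ble_smul_of_le_of_ascent cs a h3 (ih hredσ' hredω')

lemma ble_of_bruhat {u w : W} (h : bruhatLE cs u w) : ble cs u w := by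
  obtain ⟨l, red, hl, l', sub, hu⟩ := h
  obtain ⟨l'', hsub'', red'', hπ''⟩ := deletion cs l'
  have h2 := ble_of_sublist_core cs (hsub''.trans sub) red'' red
  rwa [hπ'', hu, hl] at h2

lemma bruhat_of_ble {u w : W} (h : ble cs u w) : bruhatLE cs u w := by
  obtain ⟨ω, red, hw⟩ := cs.exists_reduced_word' w
  obtain ⟨σ, hsub, _, hπ⟩ := subword_of_ble cs h red hw.symm
  exact ⟨ω, red, hw.symm, σ, hsub, hπ⟩

/-! ### The Demazure product -/

noncomputable def dem (l : List B) (y : W) : W :=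
  l.foldr (fun i d => if cs.length d < cs.length (cs.simple i * d) then cs.simple i * d else d) y

lemma dem_nil (y : W) : dem cs [] y = y := rfl

lemma dem_cons (i : B) (l : List B) (y : W) :
    dem cs (i :: l) y = if ℓ (dem cs l y) < ℓ (s i * dem cs l y)
      then s i * dem cs l y else dem cs l y := rfl

lemma dem_spec (l : List B) (y : W) : ∃ σ, σ.Sublist l ∧ π σ * y = dem cs l y := by
  induction l with
  | nil => exact ⟨[], List.nil_sublist [], by simp [dem_nil]⟩
  | cons i l ih =>
    obtain ⟨σ, hsub, hπ⟩ := ih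
    rw [dem_cons]
    by_cases h : ℓ (dem cs l y) < ℓ (s i * dem cs l y)
    · rw [if_pos h]
      exact ⟨i :: σ, hsub.cons₂ i, by rw [wordProd_cons, mul_assoc, hπ]⟩
    · rw [if_neg h]
      exact ⟨σ, hsub.cons i, hπ⟩

lemma dem_max (y : W) : ∀ (l : List B), cs.IsReduced l → ∀ u v : W,
    bruhatLE cs u (π l) → bruhatLE cs v y → ble cs (u * v) (dem cs l y) := by
  intro l
  induction l with
  | nil =>
    intro _ u v hu hv
    have hu1 : u = 1 := bruhat_le_one cs (by rwa [wordProd_nil] at hu)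
    rw [hu1, one_mul, dem_nil]
    exact ble_of_bruhat cs hv
  | cons i l ih =>
    intro hred u v hu hv
    have hredl : cs.IsReduced l := by simpa using hred.drop 1
    obtain ⟨σ, hsub, _, hπσ⟩ := subword_of_ble cs (ble_of_bruhat cs hu) hred rfl
    rw [dem_cons]
    cases hsub with
    | cons _ hsub' =>
      have hu' : bruhatLE cs u (π l) := ⟨l, hredl, rfl, σ, hsub', hπσ⟩
      have hle := ih hredl u v hu' hv
      by_cases hbr : ℓ (dem cs l y) < ℓ (s i * dem cs l y)
      · rw [if_pos hbr]
        exact ble_trans cs hle (ble_smul_of_lt cs hbr)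
      · rw [if_neg hbr]
        exact hle
    | @cons_cons σ₁ _ _ hsub' =>
      have hsu : bruhatLE cs (s i * u) (π l) :=
        ⟨l, hredl, rfl, σ₁, hsub',
          by rw [← hπσ, wordProd_cons, cs.simple_mul_simple_cancel_left]⟩
      have hle := ih hredl (s i * u) v hsu hv
      have hkey : s i * (s i * u * v) = u * v := by
        rw [← mul_assoc, ← mul_assoc, cs.simple_mul_simple_self, one_mul]
      by_cases hbr : ℓ (dem cs l y) < ℓ (s i * dem cs l y)
      · rw [if_pos hbr]
        have h4 := ble_smul_of_le_of_ascent cs i hbr hle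
        rwa [hkey] at h4
      · rw [if_neg hbr]
        have hbr' : ℓ (s i * dem cs l y) < ℓ (dem cs l y) := by
          rcases cs.length_simple_mul (dem cs l y) i with h | h <;> omega
        have h4 := ble_smul_of_le_of_descent cs i hbr' hle
        rwa [hkey] at h4

end DemazureAux

/-- For `x, y` in a Coxeter group, the set `{uv : u ≤ x, v ≤ y}` contains a unique
maximal element in Bruhat order (the Demazure product `x * y`). -/
theorem demazure_product_exists_unique {B W : Type*} [Group W] {M : CoxeterMatrix B}
    (cs : CoxeterSystem M W) (x y : W) :
    ∃! m : W, (∃ u v : W, bruhatLE cs u x ∧ bruhatLE cs v y ∧ m = u * v) ∧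
      ∀ z : W, (∃ u v : W, bruhatLE cs u x ∧ bruhatLE cs v y ∧ z = u * v) →
        bruhatLE cs z m := by
  obtain ⟨ωx, redx, hx⟩ := cs.exists_reduced_word' x
  refine ⟨DemazureAux.dem cs ωx y, ⟨?_, ?_⟩, ?_⟩
  · obtain ⟨σ, hsub, hπ⟩ := DemazureAux.dem_spec cs ωx y
    exact ⟨cs.wordProd σ, y, ⟨ωx, redx, hx.symm, σ, hsub, rfl⟩,
      DemazureAux.bruhat_refl cs y, hπ.symm⟩
  · rintro z ⟨u, v, hu, hv, rfl⟩
    apply DemazureAux.bruhat_of_ble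
    exact DemazureAux.dem_max cs y ωx redx u v (by rwa [← hx]) hv
  · rintro m' ⟨⟨u, v, hu, hv, rfl⟩, hmax'⟩
    apply DemazureAux.bruhat_antisymm cs
    · apply DemazureAux.bruhat_of_ble
      exact DemazureAux.dem_max cs y ωx redx u v (by rwa [← hx]) hv
    · obtain ⟨σ, hsub, hπ⟩ := DemazureAux.dem_spec cs ωx y
      exact hmax' (DemazureAux.dem cs ωx y)
        ⟨cs.wordProd σ, y, ⟨ωx, redx, hx.symm, σ, hsub, rfl⟩,
          DemazureAux.bruhat_refl cs y, hπ.symm⟩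
end

section
/- For elements x, y in a Coxeter group W, the Demazure product x * y can be written as u'y for some u' ≤ x with ℓ(x * y) = ℓ(u') + ℓ(y), and also as xv' for some v' ≤ y with ℓ(x * y) = ℓ(x) + ℓ(v'). -/
open List

namespace BruhatAux

variable {B W : Type*} [Group W] {M : CoxeterMatrix B} (cs : CoxeterSystem M W)

/-- mod-2 indicator of equality -/
noncomputable def ind (a b : W) : ZMod 2 :=
  @ite _ (a = b) (Classical.dec _) 1 0

lemma ind_congr {a b c d : W} (h : (a = b) ↔ (c = d)) : ind a b = ind c d := by
  unfold ind
  split_ifs with h1 h2 h2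
  · rfl
  · exact absurd (h.mp h1) h2
  · exact absurd (h.mpr h2) h1
  · rfl

lemma ind_of_eq {a b : W} (h : a = b) : ind a b = 1 := by
  unfold ind; split_ifs; rfl

lemma ind_of_ne {a b : W} (h : a ≠ b) : ind a b = 0 := by
  unfold ind
  split_ifs with h1
  · exact absurd h1 h
  · rfl

lemma zmod2_add_add (x c : ZMod 2) : x + c + c = x := by
  have h : c + c = 0 := by
    have : c + c = 2 * c := (two_mul c).symm
    rw [this, show (2 : ZMod 2) = 0 from rfl, zero_mul]
  rw [add_assoc, h, add_zero]

/-- mod-2 count of occurrences -/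
noncomputable def cnt2 (t : W) : List W → ZMod 2
  | [] => 0
  | a :: l => ind a t + cnt2 t l

lemma cnt2_ne_zero_mem {t : W} {l : List W} (h : cnt2 t l ≠ 0) : t ∈ l := by
  induction l with
  | nil => exact absurd rfl h
  | cons a l ih =>
    by_cases ha : a = t
    · exact ha ▸ (List.mem_cons_self (a := a) (l := l))
    · have : cnt2 t (a :: l) = cnt2 t l := by
        show ind a t + cnt2 t l = cnt2 t l
        rw [ind_of_ne ha, zero_add]
      exact List.mem_cons_of_mem a (ih (this ▸ h))

/-- The generator of the parity representation. -/
noncomputable def eta (i : B) : Equiv.Perm (W × ZMod 2) :=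
  Function.Involutive.toPerm
    (fun p => (cs.simple i * p.1 * cs.simple i, p.2 + ind p.1 (cs.simple i)))
    (by
      rintro ⟨t, e⟩
      have h1 : cs.simple i * (cs.simple i * t * cs.simple i) * cs.simple i = t := by
        simp [mul_assoc, cs.simple_mul_simple_self, cs.simple_mul_simple_cancel_left]
      refine Prod.ext h1 ?_
      have h2 : ind (cs.simple i * t * cs.simple i) (cs.simple i) = ind t (cs.simple i) := by
        apply ind_congr
        constructor
        · intro h
          have := congrArg (fun z => cs.simple i * z * cs.simple i) h
          simpa [mul_assoc, cs.simple_mul_simple_self, cs.simple_mul_simple_cancel_left] using this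
        · intro h; rw [h]; simp [cs.simple_mul_simple_self]
      show e + ind t (cs.simple i) + ind (cs.simple i * t * cs.simple i) (cs.simple i) = e
      rw [h2, zmod2_add_add])

lemma eta_apply (i : B) (t : W) (e : ZMod 2) :
    eta cs i (t, e) = (cs.simple i * t * cs.simple i, e + ind t (cs.simple i)) := rfl

lemma ris_cons (i : B) (ω : List B) :
    cs.rightInvSeq (i :: ω) =
      ((cs.wordProd ω)⁻¹ * cs.simple i * cs.wordProd ω) :: cs.rightInvSeq ω := rfl

lemma prod_eta_apply (ω : List B) (t : W) (e : ZMod 2) :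
    (ω.map (eta cs)).prod (t, e) =
      (cs.wordProd ω * t * (cs.wordProd ω)⁻¹, e + cnt2 t (cs.rightInvSeq ω)) := by
  induction ω generalizing e with
  | nil => simp [cnt2, CoxeterSystem.rightInvSeq]
  | cons i ω ih =>
    rw [List.map_cons, List.prod_cons, Equiv.Perm.mul_apply, ih, eta_apply, ris_cons]
    have hind : ind (cs.wordProd ω * t * (cs.wordProd ω)⁻¹) (cs.simple i)
        = ind ((cs.wordProd ω)⁻¹ * cs.simple i * cs.wordProd ω) t := by
      apply ind_congr
      constructor
      · intro h
        rw [← h]; group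
      · intro h
        rw [← h]; group
    refine Prod.ext ?_ ?_
    · show cs.simple i * (cs.wordProd ω * t * (cs.wordProd ω)⁻¹) * cs.simple i
        = cs.wordProd (i :: ω) * t * (cs.wordProd (i :: ω))⁻¹
      rw [cs.wordProd_cons, mul_inv_rev, cs.inv_simple]
      group
    · show e + cnt2 t (cs.rightInvSeq ω) + ind (cs.wordProd ω * t * (cs.wordProd ω)⁻¹) (cs.simple i)
        = e + (ind ((cs.wordProd ω)⁻¹ * cs.simple i * cs.wordProd ω) t + cnt2 t (cs.rightInvSeq ω))
      rw [hind]; ring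

lemma simple_shift (i j : B) (a : ℕ) :
    cs.simple j * (cs.simple i * cs.simple j) ^ a
      = (cs.simple j * cs.simple i) ^ a * cs.simple j := by
  induction a with
  | zero => simp
  | succ a ih =>
    rw [pow_succ, ← mul_assoc, ih, pow_succ]
    group

lemma pow_inv_flip (i j : B) (a : ℕ) :
    ((cs.simple i * cs.simple j) ^ a)⁻¹ = (cs.simple j * cs.simple i) ^ a := by
  rw [← inv_pow]
  congr 1
  rw [mul_inv_rev, cs.inv_simple, cs.inv_simple]

lemma ris_alt (i j : B) (n : ℕ) :
    cs.rightInvSeq (CoxeterSystem.alternatingWord i j (n + 1)) =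
      ((cs.simple j * cs.simple i) ^ n * cs.simple j)
        :: cs.rightInvSeq (CoxeterSystem.alternatingWord i j n) := by
  rw [CoxeterSystem.alternatingWord_succ', ris_cons]
  congr 1
  rw [cs.prod_alternatingWord_eq_mul_pow]
  rcases Nat.even_or_odd n with he | ho
  · obtain ⟨a, rfl⟩ := he
    have hdiv : (a + a) / 2 = a := by omega
    rw [if_pos (Even.add_self a), if_pos (Even.add_self a), hdiv, one_mul,
      pow_inv_flip cs i j a, mul_assoc, simple_shift cs i j a, ← mul_assoc, ← pow_add]
  · obtain ⟨a, rfl⟩ := ho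
    have hne : ¬ Even (2 * a + 1) := by
      rw [Nat.even_iff]; omega
    have hdiv : (2 * a + 1) / 2 = a := by omega
    rw [if_neg hne, if_neg hne, hdiv, simple_shift cs i j a]
    have hzinv : ((cs.simple j * cs.simple i) ^ a * cs.simple j)⁻¹
        = (cs.simple j * cs.simple i) ^ a * cs.simple j := by
      calc ((cs.simple j * cs.simple i) ^ a * cs.simple j)⁻¹
          = cs.simple j * ((cs.simple j * cs.simple i) ^ a)⁻¹ := by
            rw [mul_inv_rev, cs.inv_simple]
        _ = cs.simple j * (cs.simple i * cs.simple j) ^ a := by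
            rw [pow_inv_flip cs j i a]
        _ = (cs.simple j * cs.simple i) ^ a * cs.simple j := simple_shift cs i j a
    rw [hzinv, mul_assoc ((cs.simple j * cs.simple i) ^ a) (cs.simple j) (cs.simple i),
      ← pow_succ, ← mul_assoc, ← pow_add]
    congr 2
    omega

lemma cnt2_alt_add (i j : B) (t : W) (k : ℕ) :
    cnt2 t (cs.rightInvSeq (CoxeterSystem.alternatingWord i j (k + M i j)))
      = cnt2 t (cs.rightInvSeq (CoxeterSystem.alternatingWord i j k))
        + cnt2 t (cs.rightInvSeq (CoxeterSystem.alternatingWord i j (M i j))) := by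
  induction k with
  | zero =>
    show cnt2 t _ = cnt2 t (cs.rightInvSeq (CoxeterSystem.alternatingWord i j 0)) + _
    rw [show CoxeterSystem.alternatingWord i j 0 = [] from rfl, zero_add]
    show _ = 0 + _
    rw [zero_add]
  | succ k ih =>
    have hsh : k + 1 + M i j = (k + M i j) + 1 := by omega
    rw [hsh, ris_alt, ris_alt]
    show ind _ t + _ = ind _ t + _ + _
    have hper : (cs.simple j * cs.simple i) ^ (k + M i j) * cs.simple j
        = (cs.simple j * cs.simple i) ^ k * cs.simple j := by
      rw [pow_add, cs.simple_mul_simple_pow' i j, mul_one]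
    rw [hper, ih]
    ring

lemma eta_liftable : M.IsLiftable (eta cs) := by
  intro i j
  have hpow : ∀ m : ℕ, (eta cs i * eta cs j) ^ m
      = ((CoxeterSystem.alternatingWord i j (2 * m)).map (eta cs)).prod := by
    intro m
    induction m with
    | zero => simp [CoxeterSystem.alternatingWord]
    | succ m ih =>
      have h2 : 2 * (m + 1) = (2 * m + 1) + 1 := by omega
      have hw : CoxeterSystem.alternatingWord i j (2 * (m + 1))
          = i :: j :: CoxeterSystem.alternatingWord i j (2 * m) := by
        rw [h2, CoxeterSystem.alternatingWord_succ', CoxeterSystem.alternatingWord_succ']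
        have h3 : ¬ Even (2 * m + 1) := by rw [Nat.even_iff]; omega
        have h4 : Even (2 * m) := even_two_mul m
        rw [if_neg h3, if_pos h4]
      rw [hw, List.map_cons, List.map_cons, List.prod_cons, List.prod_cons, ← ih,
        pow_succ']
      rw [mul_assoc]
  rw [hpow (M i j)]
  apply Equiv.ext
  rintro ⟨t, e⟩
  rw [prod_eta_apply]
  have hprod : cs.wordProd (CoxeterSystem.alternatingWord i j (2 * M i j)) = 1 := by
    rw [cs.prod_alternatingWord_eq_mul_pow, if_pos (even_two_mul (M i j)),
      Nat.mul_div_cancel_left (M i j) (by norm_num : 0 < 2), one_mul,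
      cs.simple_mul_simple_pow i j]
  have hcnt : cnt2 t (cs.rightInvSeq (CoxeterSystem.alternatingWord i j (2 * M i j))) = 0 := by
    have h2 : 2 * M i j = M i j + M i j := by omega
    rw [h2, cnt2_alt_add cs i j t (M i j)]
    have := zmod2_add_add 0 (cnt2 t (cs.rightInvSeq (CoxeterSystem.alternatingWord i j (M i j))))
    rwa [zero_add] at this
  rw [hprod, hcnt]
  simp

/-- The parity representation of the Coxeter group. -/
noncomputable def prep : W →* Equiv.Perm (W × ZMod 2) :=
  cs.lift ⟨eta cs, eta_liftable cs⟩

lemma prep_wordProd (ω : List B) :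
    prep cs (cs.wordProd ω) = (ω.map (eta cs)).prod := by
  show prep cs (List.prod (ω.map cs.simple)) = _
  rw [map_list_prod, List.map_map]
  congr 1
  apply List.map_congr_left
  intro i _
  exact cs.lift_apply_simple (eta_liftable cs) i

/-- The reflection cocycle, valued in `ZMod 2`. -/
noncomputable def NN (w t : W) : ZMod 2 := ((prep cs w) (t, 0)).2

lemma NN_wordProd (ω : List B) (t : W) :
    NN cs (cs.wordProd ω) t = cnt2 t (cs.rightInvSeq ω) := by
  unfold NN
  rw [prep_wordProd, prod_eta_apply, zero_add]

lemma prep_apply (w t : W) (e : ZMod 2) :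
    prep cs w (t, e) = (w * t * w⁻¹, e + NN cs w t) := by
  obtain ⟨ω, rfl⟩ := cs.wordProd_surjective w
  rw [prep_wordProd, prod_eta_apply, NN_wordProd]

lemma NN_mul (a b t : W) :
    NN cs (a * b) t = NN cs b t + NN cs a (b * t * b⁻¹) := by
  unfold NN
  rw [map_mul, Equiv.Perm.mul_apply, prep_apply, prep_apply, prep_apply]
  simp

lemma NN_simple_self (i : B) : NN cs (cs.simple i) (cs.simple i) = 1 := by
  have h := NN_wordProd cs [i] (cs.simple i)
  rw [cs.wordProd_singleton] at h
  rw [h, cs.rightInvSeq_singleton]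
  show ind (cs.simple i) (cs.simple i) + 0 = 1
  rw [ind_of_eq rfl, add_zero]

lemma NN_ascent {w t : W} (ht : cs.IsReflection t)
    (h : cs.length w < cs.length (w * t)) : NN cs w t = 0 := by
  obtain ⟨ω, hred, hw⟩ := cs.exists_reduced_word' w
  rw [hw, NN_wordProd]
  by_contra hne
  have hmem : t ∈ cs.rightInvSeq ω := cnt2_ne_zero_mem hne
  have := (cs.isRightInversion_of_mem_rightInvSeq hred hmem).2
  rw [← hw] at this
  omega

lemma NN_refl {t : W} (ht : cs.IsReflection t) : NN cs t t = 1 := by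
  obtain ⟨z, i, rfl⟩ := ht
  set t := z * cs.simple i * z⁻¹ with hts
  have h1 : NN cs (z * z⁻¹) t = NN cs z⁻¹ t + NN cs z (z⁻¹ * t * z⁻¹⁻¹) := NN_mul cs z z⁻¹ t
  have h1' : z⁻¹ * t * z⁻¹⁻¹ = cs.simple i := by rw [hts]; group
  have h10 : NN cs (z * z⁻¹) t = 0 := by
    rw [mul_inv_cancel]
    unfold NN
    simp
  rw [h1', h10] at h1
  have h2 : NN cs ((z * cs.simple i) * z⁻¹) t
      = NN cs z⁻¹ t + NN cs (z * cs.simple i) (z⁻¹ * t * z⁻¹⁻¹) :=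
    NN_mul cs (z * cs.simple i) z⁻¹ t
  have h3 : NN cs (z * cs.simple i) (cs.simple i)
      = NN cs (cs.simple i) (cs.simple i)
        + NN cs z (cs.simple i * cs.simple i * (cs.simple i)⁻¹) :=
    NN_mul cs z (cs.simple i) (cs.simple i)
  have h3' : cs.simple i * cs.simple i * (cs.simple i)⁻¹ = cs.simple i := by
    rw [cs.inv_simple, cs.simple_mul_simple_cancel_right]
  rw [h3', NN_simple_self] at h3
  rw [h1', h3] at h2
  have hteq : (z * cs.simple i) * z⁻¹ = t := by rw [hts]
  rw [hteq] at h2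
  -- h2 : NN t t = NN z⁻¹ t + (1 + NN z (s i)),  h1 : 0 = NN z⁻¹ t + NN z (s i)
  rw [h2]
  linear_combination -h1

lemma NN_descent {w t : W} (ht : cs.IsReflection t)
    (h : cs.length (w * t) < cs.length w) : NN cs w t = 1 := by
  have key := NN_mul cs (w * t) t t
  have h1 : (w * t) * t = w := by rw [mul_assoc, ht.mul_self, mul_one]
  have h2 : t * t * t⁻¹ = t := by rw [ht.mul_self, one_mul, ht.inv]
  rw [h1, h2] at key
  have h3 : NN cs (w * t) t = 0 := by
    apply NN_ascent cs ht
    rw [mul_assoc, ht.mul_self, mul_one]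
    exact h
  rw [key, h3, NN_refl cs ht, add_zero]

/-- Strong exchange property. -/
theorem strong_exchange (ω : List B) {t : W} (ht : cs.IsReflection t)
    (h : cs.length (cs.wordProd ω * t) < cs.length (cs.wordProd ω)) :
    ∃ j, ∃ hj : j < ω.length, cs.wordProd (ω.eraseIdx j) = cs.wordProd ω * t := by
  have h1 : cnt2 t (cs.rightInvSeq ω) = 1 := by
    rw [← NN_wordProd]
    exact NN_descent cs ht h
  have hmem : t ∈ cs.rightInvSeq ω := by
    apply cnt2_ne_zero_mem
    rw [h1]
    exact one_ne_zero
  obtain ⟨j, hj, hget⟩ := List.mem_iff_getElem.mp hmem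
  rw [cs.length_rightInvSeq] at hj
  refine ⟨j, hj, ?_⟩
  have := cs.wordProd_mul_getD_rightInvSeq ω j
  rw [List.getD_eq_getElem _ 1 (by rw [cs.length_rightInvSeq]; exact hj), hget] at this
  exact this.symm

/-- One step in the Bruhat order: multiply by a reflection, increasing length. -/
def bstep (a b : W) : Prop :=
  ∃ t, cs.IsReflection t ∧ b = a * t ∧ cs.length a < cs.length b

/-- Bruhat order, defined via chains of reflections. -/
def ble : W → W → Prop := Relation.ReflTransGen (bstep cs)

lemma ble_length {u w : W} (h : ble cs u w) : cs.length u ≤ cs.length w := by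
  induction h with
  | refl => exact le_refl _
  | tail _ hstep ih =>
    obtain ⟨t, _, _, hlen⟩ := hstep
    omega

lemma ble_eq_of_length {u w : W} (h : ble cs u w) (h2 : cs.length w ≤ cs.length u) :
    u = w := by
  induction h with
  | refl => rfl
  | tail hrest hstep ih =>
    obtain ⟨t, _, _, hlen⟩ := hstep
    have := ble_length cs hrest
    omega

lemma subword_of_ble {u w : W} (h : ble cs u w) :
    ∀ ω : List B, cs.wordProd ω = w → ∃ ω', ω'.Sublist ω ∧ cs.wordProd ω' = u := by
  intro ω hω
  induction h using Relation.ReflTransGen.head_induction_on with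
  | refl => exact ⟨ω, List.Sublist.refl ω, hω⟩
  | @head a c hstep hrest ih =>
    obtain ⟨ω', hsub, hprod⟩ := ih
    obtain ⟨t, ht, hc, hlen⟩ := hstep
    have ha : c * t = a := by rw [hc, mul_assoc, ht.mul_self, mul_one]
    have hlt : cs.length (cs.wordProd ω' * t) < cs.length (cs.wordProd ω') := by
      rw [hprod, ha]
      exact hc ▸ hlen
    obtain ⟨j, hj, hval⟩ := strong_exchange cs ω' ht hlt
    refine ⟨ω'.eraseIdx j, (List.eraseIdx_sublist ω' j).trans hsub, ?_⟩
    rw [hval, hprod, ha]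

lemma exists_reduced_concat {w : W} {i : B}
    (h : cs.length (w * cs.simple i) < cs.length w) :
    ∃ r : List B, cs.IsReduced (r ++ [i]) ∧ cs.wordProd (r ++ [i]) = w ∧
      r.length + 1 = cs.length w ∧ cs.wordProd r = w * cs.simple i := by
  obtain ⟨r, hred, hr⟩ := cs.exists_reduced_word' (w * cs.simple i)
  have hlen : cs.length (w * cs.simple i) + 1 = cs.length w := by
    rcases cs.length_mul_simple w i with h1 | h1
    · omega
    · exact h1
  have hrlen : r.length = cs.length (w * cs.simple i) := by
    rw [← hred, ← hr]
  have hprod : cs.wordProd (r ++ [i]) = w := by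
    rw [cs.wordProd_append, cs.wordProd_singleton, ← hr,
      cs.simple_mul_simple_cancel_right]
  refine ⟨r, ?_, hprod, by simp [hrlen]; omega, hr.symm⟩
  unfold CoxeterSystem.IsReduced
  rw [hprod]
  simp [hrlen]
  omega

lemma bstep_simple_ascent {w : W} {i : B}
    (hasc : cs.length w < cs.length (w * cs.simple i)) : bstep cs w (w * cs.simple i) :=
  ⟨cs.simple i, cs.isReflection_simple i, rfl, hasc⟩

lemma ble_ascent_lift {w : W} {i : B}
    (hasc : cs.length w < cs.length (w * cs.simple i)) {u : W} (h : ble cs u w) :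
    ble cs (u * cs.simple i) (w * cs.simple i) := by
  induction h using Relation.ReflTransGen.head_induction_on with
  | refl => exact Relation.ReflTransGen.refl
  | @head a c hstep hrest ih =>
    obtain ⟨t, ht, hc, hlen⟩ := hstep
    have ht' : cs.IsReflection (cs.simple i * t * cs.simple i) := by
      have := ht.conj (cs.simple i)
      rwa [cs.inv_simple] at this
    have hkey : (a * cs.simple i) * (cs.simple i * t * cs.simple i) = c * cs.simple i := by
      rw [hc]
      simp [mul_assoc, cs.simple_mul_simple_cancel_left]
    rcases Nat.lt_trichotomy (cs.length (a * cs.simple i)) (cs.length (c * cs.simple i))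
      with hlt | heq | hgt
    · exact Relation.ReflTransGen.head ⟨_, ht', hkey.symm, hlt⟩ ih
    · exfalso
      have := ht'.length_mul_left_ne (a * cs.simple i)
      rw [hkey] at this
      omega
    · -- the forced case: a * s i = c
      have hca : c * t = a := by rw [hc, mul_assoc, ht.mul_self, mul_one]
      rcases cs.length_mul_simple a i with ha1 | ha1
      all_goals rcases cs.length_mul_simple c i with hc1 | hc1
      all_goals try omega
      -- surviving: ha1 : ℓ(a sᵢ) = ℓ a + 1, hc1 : ℓ(c sᵢ) + 1 = ℓ c
      have hdesc : cs.length (c * cs.simple i) < cs.length c := by omega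
      obtain ⟨r, hredr, hrprod, hrlen, hrinit⟩ := exists_reduced_concat cs hdesc
      have hlt2 : cs.length (cs.wordProd (r ++ [i]) * t) < cs.length (cs.wordProd (r ++ [i])) := by
        rw [hrprod, hca]
        omega
      obtain ⟨j, hj, hval⟩ := strong_exchange cs (r ++ [i]) ht hlt2
      rw [hrprod, hca] at hval
      rw [List.length_append, List.length_singleton] at hj
      by_cases hjr : j < r.length
      · exfalso
        rw [List.eraseIdx_append_of_lt_length hjr, cs.wordProd_append,
          cs.wordProd_singleton] at hval
        have h5 : a * cs.simple i = cs.wordProd (r.eraseIdx j) := by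
          rw [← hval, cs.simple_mul_simple_cancel_right]
        have h6 := cs.length_wordProd_le (r.eraseIdx j)
        rw [← h5] at h6
        have h7 : (r.eraseIdx j).length + 1 = r.length :=
          List.length_eraseIdx_add_one hjr
        omega
      · have hjeq : j = r.length := by omega
        rw [hjeq] at hval
        rw [List.eraseIdx_append_of_length_le (le_refl _)] at hval
        simp at hval
        -- hval : cs.wordProd r = a  (after eraseIdx at end gives r)
        have h8 : a = c * cs.simple i := by rw [← hval, hrinit]
        have h9 : a * cs.simple i = c := by
          rw [h8, cs.simple_mul_simple_cancel_right]
        rw [h9]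
        exact hrest.trans (Relation.ReflTransGen.single (bstep_simple_ascent cs hasc))

lemma sublist_concat_cases {α : Type*} {l ω : List α} {k : α} (h : l.Sublist (ω ++ [k])) :
    l.Sublist ω ∨ ∃ l₁, l₁.Sublist ω ∧ l = l₁ ++ [k] := by
  have h' := h.reverse
  rw [List.reverse_append] at h'
  simp only [List.reverse_singleton, List.singleton_append] at h'
  rcases List.sublist_cons_iff.mp h' with hc | ⟨r, hlr, hr⟩
  · left
    have := hc.reverse
    simpa using this
  · right
    refine ⟨r.reverse, by simpa using hr.reverse, ?_⟩
    have := congrArg List.reverse hlr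
    simpa using this

lemma ble_of_sublist_reduced {ω : List B} (hred : cs.IsReduced ω) :
    ∀ {l : List B}, l.Sublist ω → ble cs (cs.wordProd l) (cs.wordProd ω) := by
  induction ω using List.reverseRecOn with
  | nil =>
    intro l hl
    rw [List.sublist_nil.mp hl]
    exact Relation.ReflTransGen.refl
  | append_singleton ω₀ k ih =>
    intro l hl
    have hred₀ : cs.IsReduced ω₀ := by
      have := hred.take ω₀.length
      rwa [List.take_left] at this
    have hprod : cs.wordProd (ω₀ ++ [k]) = cs.wordProd ω₀ * cs.simple k := by
      rw [cs.wordProd_append, cs.wordProd_singleton]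
    have hasc : cs.length (cs.wordProd ω₀) < cs.length (cs.wordProd ω₀ * cs.simple k) := by
      have h1 : cs.length (cs.wordProd (ω₀ ++ [k])) = ω₀.length + 1 := by
        rw [hred]
        simp
      rw [hprod] at h1
      rw [h1, hred₀]
      omega
    rcases sublist_concat_cases hl with hc | ⟨l₁, hsub₁, rfl⟩
    · rw [hprod]
      exact (ih hred₀ hc).trans
        (Relation.ReflTransGen.single (bstep_simple_ascent cs hasc))
    · rw [hprod, cs.wordProd_append, cs.wordProd_singleton]
      exact ble_ascent_lift cs hasc (ih hred₀ hsub₁)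

lemma ble_descent_lift {w : W} {i : B}
    (hdesc : cs.length (w * cs.simple i) < cs.length w) {u : W} (h : ble cs u w) :
    ble cs (u * cs.simple i) w := by
  obtain ⟨r, hredr, hrprod, _, _⟩ := exists_reduced_concat cs hdesc
  obtain ⟨l₂, hsub, hl₂⟩ := subword_of_ble cs h (r ++ [i]) hrprod
  rcases sublist_concat_cases hsub with hc | ⟨l₃, hsub₃, rfl⟩
  · have : cs.wordProd (l₂ ++ [i]) = u * cs.simple i := by
      rw [cs.wordProd_append, cs.wordProd_singleton, hl₂]
    rw [← this, ← hrprod]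
    exact ble_of_sublist_reduced cs hredr (hc.append_right [i])
  · have h4 : u * cs.simple i = cs.wordProd l₃ := by
      rw [← hl₂, cs.wordProd_append, cs.wordProd_singleton,
        cs.simple_mul_simple_cancel_right]
    rw [h4, ← hrprod]
    exact ble_of_sublist_reduced cs hredr (hsub₃.trans (List.sublist_append_left r [i]))


lemma bruhatLE_iff_ble {u w : W} : bruhatLE cs u w ↔ ble cs u w := by
  constructor
  · rintro ⟨l, hred, hl, l', hsub, hl'⟩
    rw [← hl, ← hl']
    exact ble_of_sublist_reduced cs hred hsub
  · intro h
    obtain ⟨ω, hred, hw⟩ := cs.exists_reduced_word' w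
    obtain ⟨ω', hsub, hu⟩ := subword_of_ble cs h ω hw.symm
    exact ⟨ω, hred, hw.symm, ω', hsub, hu⟩

lemma bruhatLE_refl (w : W) : bruhatLE cs w w := by
  obtain ⟨ω, hred, hw⟩ := cs.exists_reduced_word' w
  exact ⟨ω, hred, hw.symm, ω, List.Sublist.refl ω, hw.symm⟩

lemma bruhatLE_inv {u w : W} (h : bruhatLE cs u w) : bruhatLE cs u⁻¹ w⁻¹ := by
  obtain ⟨l, hred, hl, l', hsub, hl'⟩ := h
  exact ⟨l.reverse, (cs.isReduced_reverse_iff l).mpr hred,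
    by rw [cs.wordProd_reverse, hl], l'.reverse, hsub.reverse,
    by rw [cs.wordProd_reverse, hl']⟩

/-- Demazure fold of a word onto an element. -/
noncomputable def dfold : W → List B → W
  | w, [] => w
  | w, i :: l =>
    dfold (if cs.length (w * cs.simple i) ≤ cs.length w then w else w * cs.simple i) l

lemma dfold_nil (w : W) : dfold cs w [] = w := rfl

lemma dfold_cons (w : W) (i : B) (l : List B) :
    dfold cs w (i :: l) =
      dfold cs (if cs.length (w * cs.simple i) ≤ cs.length w then w else w * cs.simple i) l :=
  rfl

lemma dfold_decomp : ∀ (l : List B) (w : W), ∃ l'' : List B, l''.Sublist l ∧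
    dfold cs w l = w * cs.wordProd l'' ∧
    cs.length (dfold cs w l) = cs.length w + l''.length := by
  intro l
  induction l with
  | nil =>
    intro w
    exact ⟨[], List.nil_sublist [], by rw [dfold_nil, cs.wordProd_nil, mul_one],
      by rw [dfold_nil]; simp⟩
  | cons i l ih =>
    intro w
    by_cases hle : cs.length (w * cs.simple i) ≤ cs.length w
    · obtain ⟨l'', hsub, heq, hlen⟩ := ih w
      refine ⟨l'', hsub.cons i, ?_, ?_⟩
      · rw [dfold_cons, if_pos hle]
        exact heq
      · rw [dfold_cons, if_pos hle]
        exact hlen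
    · have hasc : cs.length (w * cs.simple i) = cs.length w + 1 := by
        rcases cs.length_mul_simple w i with h1 | h1
        · exact h1
        · omega
      obtain ⟨l'', hsub, heq, hlen⟩ := ih (w * cs.simple i)
      refine ⟨i :: l'', hsub.cons₂ i, ?_, ?_⟩
      · rw [dfold_cons, if_neg hle, heq, cs.wordProd_cons, mul_assoc]
      · rw [dfold_cons, if_neg hle, hlen, hasc]
        simp
        omega

lemma dfold_mono : ∀ (l : List B) (u w : W), ble cs u w →
    ∀ {l' : List B}, l'.Sublist l → ble cs (u * cs.wordProd l') (dfold cs w l) := by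
  intro l
  induction l with
  | nil =>
    intro u w h l' hsub
    rw [List.sublist_nil.mp hsub, cs.wordProd_nil, mul_one]
    exact h
  | cons i l ih =>
    intro u w h l' hsub
    have hW : ∀ v : W, ble cs v w →
        ble cs v (if cs.length (w * cs.simple i) ≤ cs.length w then w else w * cs.simple i)
        ∧ ble cs (v * cs.simple i)
            (if cs.length (w * cs.simple i) ≤ cs.length w then w else w * cs.simple i) := by
      intro v hv
      by_cases hle : cs.length (w * cs.simple i) ≤ cs.length w
      · rw [if_pos hle]
        have hdesc : cs.length (w * cs.simple i) < cs.length w :=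
          lt_of_le_of_ne hle (cs.length_mul_simple_ne w i)
        exact ⟨hv, ble_descent_lift cs hdesc hv⟩
      · rw [if_neg hle]
        have hasc : cs.length w < cs.length (w * cs.simple i) := by omega
        exact ⟨hv.trans (Relation.ReflTransGen.single (bstep_simple_ascent cs hasc)),
          ble_ascent_lift cs hasc hv⟩
    rcases List.sublist_cons_iff.mp hsub with hc | ⟨r, rfl, hr⟩
    · rw [dfold_cons]
      exact ih u _ (hW u h).1 hc
    · have heq2 : u * cs.wordProd (i :: r) = (u * cs.simple i) * cs.wordProd r := by
        rw [cs.wordProd_cons, mul_assoc]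
      rw [heq2, dfold_cons]
      exact ih (u * cs.simple i) _ (hW u h).2 hr

theorem demazure_aux (x y m : W)
    (hmem : ∃ u v : W, bruhatLE cs u x ∧ bruhatLE cs v y ∧ m = u * v)
    (hmax : ∀ z : W, (∃ u v : W, bruhatLE cs u x ∧ bruhatLE cs v y ∧ z = u * v) →
      bruhatLE cs z m) :
    ∃ v' : W, bruhatLE cs v' y ∧ m = x * v' ∧
      cs.length m = cs.length x + cs.length v' := by
  obtain ⟨u, v, hu, hv, hm⟩ := hmem
  obtain ⟨ly, hredy, hly, lv, hsubv, hlv⟩ := hv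
  obtain ⟨l'', hsub'', hDeq, hDlen⟩ := dfold_decomp cs ly x
  have hv''y : bruhatLE cs (cs.wordProd l'') y := ⟨ly, hredy, hly, l'', hsub'', rfl⟩
  have hDm : bruhatLE cs (dfold cs x ly) m :=
    hmax _ ⟨x, cs.wordProd l'', bruhatLE_refl cs x, hv''y, hDeq⟩
  have hmD : ble cs (u * cs.wordProd lv) (dfold cs x ly) :=
    dfold_mono cs ly u x ((bruhatLE_iff_ble cs).mp hu) hsubv
  rw [hlv, ← hm] at hmD
  have hlen1 : cs.length m ≤ cs.length (dfold cs x ly) := ble_length cs hmD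
  have hDeqm : dfold cs x ly = m :=
    ble_eq_of_length cs ((bruhatLE_iff_ble cs).mp hDm) hlen1
  refine ⟨cs.wordProd l'', hv''y, by rw [← hDeqm, hDeq], ?_⟩
  have h1 : cs.length (cs.wordProd l'') ≤ l''.length := cs.length_wordProd_le l''
  have h2 : cs.length m ≤ cs.length x + cs.length (cs.wordProd l'') := by
    rw [← hDeqm, hDeq]
    exact cs.length_mul_le x (cs.wordProd l'')
  rw [← hDeqm, hDlen]
  rw [← hDeqm, hDlen] at h2
  omega

end BruhatAux


/-- The Demazure product `x * y` (the unique maximal element `m` of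
`{uv : u ≤ x, v ≤ y}`) can be written as `u' * y` with `u' ≤ x` and
`ℓ(x * y) = ℓ(u') + ℓ(y)`, and as `x * v'` with `v' ≤ y` and
`ℓ(x * y) = ℓ(x) + ℓ(v')`. -/
theorem demazure_product_decompositions {B W : Type*} [Group W] {M : CoxeterMatrix B}
    (cs : CoxeterSystem M W) (x y m : W)
    (hmem : ∃ u v : W, bruhatLE cs u x ∧ bruhatLE cs v y ∧ m = u * v)
    (hmax : ∀ z : W, (∃ u v : W, bruhatLE cs u x ∧ bruhatLE cs v y ∧ z = u * v) →
      bruhatLE cs z m) :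
    (∃ u' : W, bruhatLE cs u' x ∧ m = u' * y ∧
      cs.length m = cs.length u' + cs.length y) ∧
    (∃ v' : W, bruhatLE cs v' y ∧ m = x * v' ∧
      cs.length m = cs.length x + cs.length v') := by
  refine ⟨?_, BruhatAux.demazure_aux cs x y m hmem hmax⟩
  have hmem' : ∃ u v : W, bruhatLE cs u y⁻¹ ∧ bruhatLE cs v x⁻¹ ∧ m⁻¹ = u * v := by
    obtain ⟨u, v, hu, hv, hm⟩ := hmem
    exact ⟨v⁻¹, u⁻¹, BruhatAux.bruhatLE_inv cs hv, BruhatAux.bruhatLE_inv cs hu,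
      by rw [hm, mul_inv_rev]⟩
  have hmax' : ∀ z : W, (∃ u v : W, bruhatLE cs u y⁻¹ ∧ bruhatLE cs v x⁻¹ ∧ z = u * v) →
      bruhatLE cs z m⁻¹ := by
    rintro z ⟨u, v, hu, hv, hz⟩
    have hu' : bruhatLE cs u⁻¹ y := by
      have := BruhatAux.bruhatLE_inv cs hu
      rwa [inv_inv] at this
    have hv' : bruhatLE cs v⁻¹ x := by
      have := BruhatAux.bruhatLE_inv cs hv
      rwa [inv_inv] at this
    have h1 : bruhatLE cs z⁻¹ m :=
      hmax z⁻¹ ⟨v⁻¹, u⁻¹, hv', hu', by rw [hz, mul_inv_rev]⟩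
    have h2 := BruhatAux.bruhatLE_inv cs h1
    rwa [inv_inv] at h2
  obtain ⟨v', hv', hminv, hlen⟩ := BruhatAux.demazure_aux cs y⁻¹ x⁻¹ m⁻¹ hmem' hmax'
  have hv'x : bruhatLE cs v'⁻¹ x := by
    have := BruhatAux.bruhatLE_inv cs hv'
    rwa [inv_inv] at this
  refine ⟨v'⁻¹, hv'x, ?_, ?_⟩
  · rw [← inv_inv m, hminv, mul_inv_rev, inv_inv]
  · have h3 : cs.length m⁻¹ = cs.length m := cs.length_inv m
    have h4 : cs.length y⁻¹ = cs.length y := cs.length_inv y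
    have h5 : cs.length v'⁻¹ = cs.length v' := cs.length_inv v'
    omega
end
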